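/- Let ρ: B₃ → GL(3,ℂ) be given by the Tuba–Wenzl matrices depending on nonzero eigenvalues λ₁, λ₂, λ₃ (ρ(σ₁) upper triangular with diagonal λ₁, λ₂, λ₃ as in the standard classification). Then ρ factors through π: B₃ → PSL(2,ℤ) if and only if (λ₁λ₂λ₃)² = 1. -/

import Mathlib

open Matrix

/-- The braid relation `σ₁σ₂σ₁ = σ₂σ₁σ₂` as a relator in the free group on two generators. -/
def braidRels : Set (FreeGroup (Fin 2)) :=
  {FreeGroup.of 0 * FreeGroup.of 1 * FreeGroup.of 0 *
    (FreeGroup.of 1 * FreeGroup.of 0 * FreeGroup.of 1)⁻¹}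

/-- The braid group on three strands. -/
abbrev B3 := PresentedGroup braidRels

def s1 : B3 := PresentedGroup.of 0
def s2 : B3 := PresentedGroup.of 1

set_option maxHeartbeats 1600000

theorem factors_iff_3dim (l1 l2 l3 : ℂ) (h1 : l1 ≠ 0) (h2 : l2 ≠ 0) (h3 : l3 ≠ 0)
    (ρ : B3 →* Matrix.GeneralLinearGroup (Fin 3) ℂ)
    (hs1 : (ρ s1 : Matrix (Fin 3) (Fin 3) ℂ) =
      !![l1, l1 * l3 * l2⁻¹ + l2, l2; 0, l2, l2; 0, 0, l3])
    (hs2 : (ρ s2 : Matrix (Fin 3) (Fin 3) ℂ) =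
      !![l3, 0, 0; -l2, l2, 0; l2, -(l1 * l3 * l2⁻¹) - l2, l1]) :
    (s1 * s2) ^ 3 ∈ ρ.ker ↔ (l1 * l2 * l3) ^ 2 = 1 := by
  have hC : (ρ s1 : Matrix (Fin 3) (Fin 3) ℂ) * (ρ s2 : Matrix (Fin 3) (Fin 3) ℂ)
      = !![0, 0, l1 * l2; 0, -(l1 * l3), l1 * l2;
          l2 * l3, -(l1 * l3 ^ 2 * l2⁻¹) - l2 * l3, l1 * l3] := by
    rw [hs1, hs2, Matrix.mul_fin_three]
    ext i j
    fin_cases i <;> fin_cases j <;>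
      · simp only [Matrix.cons_val', Matrix.cons_val_zero, Matrix.cons_val_one,
          Matrix.head_cons, Matrix.empty_val', Matrix.cons_val_fin_one, Matrix.head_fin_const,
          Fin.reduceFinMk, Matrix.of_apply, Matrix.cons_val_two, Matrix.tail_cons]
        field_simp
        try ring
  have hC2 : ((ρ s1 : Matrix (Fin 3) (Fin 3) ℂ) * (ρ s2 : Matrix (Fin 3) (Fin 3) ℂ)) ^ 3
      = ((l1 * l2 * l3) ^ 2 : ℂ) • (1 : Matrix (Fin 3) (Fin 3) ℂ) := by
    have h1' : ((l1 * l2 * l3) ^ 2 : ℂ) • (1 : Matrix (Fin 3) (Fin 3) ℂ)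
        = !![(l1 * l2 * l3) ^ 2, 0, 0; 0, (l1 * l2 * l3) ^ 2, 0; 0, 0, (l1 * l2 * l3) ^ 2] := by
      rw [Matrix.one_fin_three]
      ext i j
      fin_cases i <;> fin_cases j <;>
        simp [Matrix.smul_apply, Matrix.vecHead, Matrix.vecTail]
    rw [pow_succ, pow_two, hC, Matrix.mul_fin_three, Matrix.mul_fin_three, h1']
    ext i j
    fin_cases i <;> fin_cases j <;>
      · simp only [Matrix.cons_val', Matrix.cons_val_zero, Matrix.cons_val_one,
          Matrix.head_cons, Matrix.empty_val', Matrix.cons_val_fin_one, Matrix.head_fin_const,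
          Fin.reduceFinMk, Matrix.of_apply, Matrix.cons_val_two, Matrix.tail_cons]
        field_simp
        try ring
  have key : ((ρ ((s1 * s2) ^ 3) : Matrix (Fin 3) (Fin 3) ℂ))
      = ((l1 * l2 * l3) ^ 2 : ℂ) • (1 : Matrix (Fin 3) (Fin 3) ℂ) := by
    rw [_root_.map_pow, _root_.map_mul, Units.val_pow_eq_pow_val, Units.val_mul, hC2]
  constructor
  · intro h
    have h' : ((ρ ((s1 * s2) ^ 3) : Matrix (Fin 3) (Fin 3) ℂ)) = 1 := by
      rw [MonoidHom.mem_ker] at h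
      rw [h]; rfl
    rw [key] at h'
    have := congrFun (congrFun h' 0) 0
    simpa using this
  · intro h
    rw [MonoidHom.mem_ker]
    ext
    rw [key, h, one_smul]
    rfl
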